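/- Let x_t ∈ ℝ^p and x* ∈ ℝ^p be fixed, let y_t = M(x_t), let i_t be an index drawn uniformly from {1,…,n} independent of the mask m, and let η > 0. If each ∇f_i is L_i-Lipschitz and L_max = max_i L_i, then E[‖y_t − x_t − η ∇f_{i_t}(y_t)‖²] ≤ (4(1 + η² L_max²)(1 − ξ)/ξ) · ( ‖x_t − x*‖² + ‖x*‖² ) + 2η² · E[‖∇f_{i_t}(x_t)‖²], where expectations are over both the mask and the random index. -/

import Mathlib

open MeasureTheory ProbabilityTheory

lemma integral_ite_prop {Ω : Type} [MeasurableSpace Ω] (P : Measure Ω) [IsProbabilityMeasure P]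
    (q : Ω → Prop) [DecidablePred q] (hB : MeasurableSet {ω | q ω}) (c1 c2 : ℝ) :
    ∫ ω, (if q ω then c1 else c2) ∂P
      = (P {ω | q ω}).toReal * c1 + (1 - (P {ω | q ω}).toReal) * c2 := by
  have h1 : (fun ω => if q ω then c1 else c2)
      = fun ω => Set.indicator {ω | q ω} (fun _ => c1 - c2) ω + c2 := by
    funext ω; by_cases h : q ω
    · rw [Set.indicator_of_mem (show ω ∈ {ω | q ω} from h)]; simp [h]
    · rw [Set.indicator_of_notMem (show ω ∉ {ω | q ω} from h)]; simp [h]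
  rw [h1, integral_add ((integrable_const (c1 - c2)).indicator hB) (integrable_const c2),
    integral_indicator_const _ hB]
  simp [measure_univ]
  rw [measureReal_def]
  ring

set_option maxHeartbeats 1000000 in
/-- **Lemma 3.**
With `y_t = M(x_t)` the compressed iterate, `i_t` uniform on `{1,…,n}`
independent of the mask, `η > 0`, and each `∇f_i` being `L_i`-Lipschitz with
`L_max = max_i L_i`:
`E[‖y_t − x_t − η∇f_{i_t}(y_t)‖²]
  ≤ (4(1 + η²L_max²)(1−ξ)/ξ)(‖x_t − x*‖² + ‖x*‖²) + 2η² E[‖∇f_{i_t}(x_t)‖²]`. -/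
theorem ist_update_direction_bound
    {Ω : Type} [MeasurableSpace Ω] (P : Measure Ω) [IsProbabilityMeasure P]
    (p : ℕ) (hp : 1 ≤ p) (ξ : ℝ) (hξ0 : 0 < ξ) (hξ1 : ξ ≤ 1)
    (m : Ω → Fin p → ℝ)
    (hm_meas : Measurable m)
    (hm01 : ∀ ω i, m ω i = 0 ∨ m ω i = 1)
    (hm_indep : iIndepFun (fun i ω => m ω i) P)
    (hm_prob : ∀ i, P {ω | m ω i = 1} = ENNReal.ofReal ξ)
    (n : ℕ) (hn : 0 < n)
    (fi : Fin n → EuclideanSpace ℝ (Fin p) → ℝ)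
    (hdiff : ∀ i, Differentiable ℝ (fi i))
    (L : Fin n → ℝ)
    (hLip : ∀ i u v, ‖gradient (fi i) u - gradient (fi i) v‖ ≤ L i * ‖u - v‖)
    (Lmax : ℝ) (hLmax : IsGreatest (Set.range L) Lmax)
    (it : Ω → Fin n)
    (hit_meas : Measurable it)
    (hit_unif : ∀ k, P {ω | it ω = k} = (n : ENNReal)⁻¹)
    (hit_indep : IndepFun m it P)
    (η : ℝ) (hη : 0 < η)
    (xt xstar : EuclideanSpace ℝ (Fin p))
    (yt : Ω → EuclideanSpace ℝ (Fin p))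
    (hyt : ∀ ω i, yt ω i = if m ω i = 1 then xt i / ξ else 0) :
    ∫ ω, ‖yt ω - xt - η • gradient (fi (it ω)) (yt ω)‖ ^ 2 ∂P
      ≤ (4 * (1 + η ^ 2 * Lmax ^ 2) * (1 - ξ) / ξ) * (‖xt - xstar‖ ^ 2 + ‖xstar‖ ^ 2)
        + 2 * η ^ 2 * ∫ ω, ‖gradient (fi (it ω)) xt‖ ^ 2 ∂P := by
  classical
  -- measurability of coordinates of m
  have hmj : ∀ j : Fin p, Measurable fun ω => m ω j :=
    fun j => (measurable_pi_apply j).comp hm_meas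
  have hSj : ∀ j : Fin p, MeasurableSet {ω | m ω j = 1} :=
    fun j => (hmj j) (measurableSet_singleton 1)
  have hPS : ∀ j : Fin p, (P {ω | m ω j = 1}).toReal = ξ := fun j => by
    rw [hm_prob j, ENNReal.toReal_ofReal hξ0.le]
  -- coordinates of yt
  have hyt_coord_meas : ∀ j, Measurable fun ω => yt ω j := by
    intro j
    have h : (fun ω => yt ω j) = fun ω => if m ω j = 1 then xt j / ξ else 0 :=
      funext fun ω => hyt ω j
    rw [h]
    exact Measurable.ite (hSj j) measurable_const measurable_const
  have haj_meas : ∀ j, Measurable fun ω => yt ω j - xt j :=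
    fun j => (hyt_coord_meas j).sub measurable_const
  have haj_bdd : ∀ j ω, |yt ω j - xt j| ≤ |xt j| / ξ + |xt j| := by
    intro j ω
    have h0 : (0:ℝ) ≤ |xt j| / ξ := by positivity
    rw [hyt ω j]
    by_cases h : m ω j = 1
    · rw [if_pos h]
      have h1 : |xt j / ξ - xt j| ≤ |xt j / ξ| + |xt j| := abs_sub _ _
      have h2 : |xt j / ξ| = |xt j| / ξ := by
        rw [abs_div, abs_of_pos hξ0]
      linarith
    · rw [if_neg h]
      simp only [zero_sub, abs_neg]
      linarith
  have hhj_meas : ∀ j, Measurable fun ω => gradient (fi (it ω)) xt j :=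
    fun j => (measurable_of_countable (fun k : Fin n => gradient (fi k) xt j)).comp hit_meas
  have hhj_bdd : ∀ j ω, |gradient (fi (it ω)) xt j| ≤ ∑ k, |gradient (fi k) xt j| :=
    fun j ω => Finset.single_le_sum (f := fun k => |gradient (fi k) xt j|)
      (fun k _ => abs_nonneg _) (Finset.mem_univ (it ω))
  have hhj_nn : ∀ j, (0:ℝ) ≤ ∑ k, |gradient (fi k) xt j| :=
    fun j => Finset.sum_nonneg fun k _ => abs_nonneg _
  -- integrability helper
  have hIntBdd : ∀ (f : Ω → ℝ) (C : ℝ), Measurable f → (∀ ω, |f ω| ≤ C) → Integrable f P := by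
    intro f C hf hb
    exact (integrable_const C).mono' hf.aestronglyMeasurable
      (ae_of_all _ fun ω => by simpa [Real.norm_eq_abs] using hb ω)
  have int_aj : ∀ j, Integrable (fun ω => yt ω j - xt j) P :=
    fun j => hIntBdd _ _ (haj_meas j) (haj_bdd j)
  have int_aj2 : ∀ j, Integrable (fun ω => (yt ω j - xt j) ^ 2) P := by
    intro j
    refine hIntBdd _ ((|xt j| / ξ + |xt j|) ^ 2) ((haj_meas j).pow_const 2) (fun ω => ?_)
    rw [abs_pow]
    exact pow_le_pow_left₀ (abs_nonneg _) (haj_bdd j ω) 2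
  have int_hj : ∀ j, Integrable (fun ω => gradient (fi (it ω)) xt j) P :=
    fun j => hIntBdd _ _ (hhj_meas j) (hhj_bdd j)
  have int_hj2 : ∀ j, Integrable (fun ω => (gradient (fi (it ω)) xt j) ^ 2) P := by
    intro j
    refine hIntBdd _ ((∑ k, |gradient (fi k) xt j|) ^ 2) ((hhj_meas j).pow_const 2) (fun ω => ?_)
    rw [abs_pow]
    exact pow_le_pow_left₀ (abs_nonneg _) (hhj_bdd j ω) 2
  have int_ajhj : ∀ j, Integrable (fun ω => (yt ω j - xt j) * gradient (fi (it ω)) xt j) P := by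
    intro j
    refine hIntBdd _ ((|xt j| / ξ + |xt j|) * ∑ k, |gradient (fi k) xt j|)
      ((haj_meas j).mul (hhj_meas j)) (fun ω => ?_)
    rw [abs_mul]
    exact mul_le_mul (haj_bdd j ω) (hhj_bdd j ω) (abs_nonneg _)
      (by positivity)
  -- the first moment of each coordinate of yt - xt vanishes
  have haj_int : ∀ j, ∫ ω, (yt ω j - xt j) ∂P = 0 := by
    intro j
    have h1 : (fun ω => yt ω j - xt j)
        = fun ω => if m ω j = 1 then xt j / ξ - xt j else 0 - xt j := by
      funext ω; rw [hyt ω j]; by_cases h : m ω j = 1 <;> simp [h]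
    rw [h1, integral_ite_prop P (fun ω => m ω j = 1) (hSj j), hPS j]
    field_simp
    ring
  -- the second moment of each coordinate
  have haj2_int : ∀ j, ∫ ω, (yt ω j - xt j) ^ 2 ∂P = (1 - ξ) / ξ * (xt j) ^ 2 := by
    intro j
    have h1 : (fun ω => (yt ω j - xt j) ^ 2)
        = fun ω => if m ω j = 1 then (xt j / ξ - xt j) ^ 2 else (0 - xt j) ^ 2 := by
      funext ω; rw [hyt ω j]; by_cases h : m ω j = 1 <;> simp [h]
    rw [h1, integral_ite_prop P (fun ω => m ω j = 1) (hSj j), hPS j]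
    field_simp
    ring
  -- cross terms vanish by independence
  have hcross : ∀ j, ∫ ω, (yt ω j - xt j) * gradient (fi (it ω)) xt j ∂P = 0 := by
    intro j
    have hφ : Measurable fun v : Fin p → ℝ => (if v j = 1 then xt j / ξ else 0) - xt j := by
      refine Measurable.sub ?_ measurable_const
      exact Measurable.ite ((measurable_pi_apply j) (measurableSet_singleton 1))
        measurable_const measurable_const
    have hX : (fun ω => yt ω j - xt j)
        = (fun v : Fin p → ℝ => (if v j = 1 then xt j / ξ else 0) - xt j) ∘ m := by
      funext ω; simp only [Function.comp]; rw [hyt ω j]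
    have hind : IndepFun (fun ω => yt ω j - xt j) (fun ω => gradient (fi (it ω)) xt j) P := by
      rw [hX]
      exact hit_indep.comp hφ (measurable_of_countable (fun k : Fin n => gradient (fi k) xt j))
    have hmul := hind.integral_mul_eq_mul_integral (int_aj j).aestronglyMeasurable (int_hj j).aestronglyMeasurable
    have hres : integral P ((fun ω => yt ω j - xt j) * fun ω => gradient (fi (it ω)) xt j) = 0 := by
      rw [hmul, haj_int j, zero_mul]
    exact hres
  -- squared norm as a sum of coordinates
  have norm_sq : ∀ v : EuclideanSpace ℝ (Fin p), ‖v‖ ^ 2 = ∑ j, (v j) ^ 2 := by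
    intro v
    rw [EuclideanSpace.norm_eq, Real.sq_sqrt (by positivity)]
    simp [sq_abs]
  -- expansion identities for the integrands
  have h1A : (fun ω => ‖yt ω - xt‖ ^ 2) = fun ω => ∑ j, (yt ω j - xt j) ^ 2 := by
    funext ω; rw [norm_sq]
    exact Finset.sum_congr rfl fun j _ => by rw [PiLp.sub_apply]
  have h1Q : (fun ω => ‖yt ω - xt - η • gradient (fi (it ω)) xt‖ ^ 2)
      = fun ω => ∑ j, ((yt ω j - xt j) ^ 2
          - 2 * η * ((yt ω j - xt j) * gradient (fi (it ω)) xt j)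
          + η ^ 2 * (gradient (fi (it ω)) xt j) ^ 2) := by
    funext ω; rw [norm_sq]
    refine Finset.sum_congr rfl fun j _ => ?_
    rw [PiLp.sub_apply, PiLp.sub_apply, PiLp.smul_apply, smul_eq_mul]
    ring
  have h1H : (fun ω => ‖gradient (fi (it ω)) xt‖ ^ 2)
      = fun ω => ∑ j, (gradient (fi (it ω)) xt j) ^ 2 :=
    funext fun ω => norm_sq _
  -- integrability of the main pieces
  have intA : Integrable (fun ω => ‖yt ω - xt‖ ^ 2) P := by
    rw [h1A]; exact integrable_finset_sum _ fun j _ => int_aj2 j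
  have intQ : Integrable (fun ω => ‖yt ω - xt - η • gradient (fi (it ω)) xt‖ ^ 2) P := by
    rw [h1Q]
    exact integrable_finset_sum _ fun j _ =>
      ((int_aj2 j).sub ((int_ajhj j).const_mul _)).add ((int_hj2 j).const_mul _)
  -- value of E‖a‖²
  have HA : ∫ ω, ‖yt ω - xt‖ ^ 2 ∂P = (1 - ξ) / ξ * ‖xt‖ ^ 2 := by
    rw [h1A, integral_finset_sum _ fun j _ => int_aj2 j]
    simp only [haj2_int]
    rw [norm_sq xt, Finset.mul_sum]
  have HH : ∫ ω, ‖gradient (fi (it ω)) xt‖ ^ 2 ∂P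
      = ∑ j, ∫ ω, (gradient (fi (it ω)) xt j) ^ 2 ∂P := by
    rw [h1H, integral_finset_sum _ fun j _ => int_hj2 j]
  -- value of E‖a - ηh‖²
  have HQ : ∫ ω, ‖yt ω - xt - η • gradient (fi (it ω)) xt‖ ^ 2 ∂P
      = (1 - ξ) / ξ * ‖xt‖ ^ 2 + η ^ 2 * ∫ ω, ‖gradient (fi (it ω)) xt‖ ^ 2 ∂P := by
    have hsum := integral_finset_sum (μ := P) Finset.univ
      (f := fun (j : Fin p) (ω : Ω) => (yt ω j - xt j) ^ 2
          - 2 * η * ((yt ω j - xt j) * gradient (fi (it ω)) xt j)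
          + η ^ 2 * (gradient (fi (it ω)) xt j) ^ 2)
      (fun j _ => ((int_aj2 j).sub ((int_ajhj j).const_mul _)).add ((int_hj2 j).const_mul _))
    rw [h1Q, hsum]
    have h2 : ∀ j : Fin p,
        ∫ ω, ((yt ω j - xt j) ^ 2
            - 2 * η * ((yt ω j - xt j) * gradient (fi (it ω)) xt j)
            + η ^ 2 * (gradient (fi (it ω)) xt j) ^ 2) ∂P
          = (1 - ξ) / ξ * (xt j) ^ 2 + η ^ 2 * ∫ ω, (gradient (fi (it ω)) xt j) ^ 2 ∂P := by
      intro j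
      have intMulC : Integrable (fun ω => 2 * η * ((yt ω j - xt j) * gradient (fi (it ω)) xt j)) P :=
        (int_ajhj j).const_mul _
      have intSub : Integrable (fun ω => (yt ω j - xt j) ^ 2
          - 2 * η * ((yt ω j - xt j) * gradient (fi (it ω)) xt j)) P :=
        (int_aj2 j).sub intMulC
      have intMul2 : Integrable (fun ω => η ^ 2 * (gradient (fi (it ω)) xt j) ^ 2) P :=
        (int_hj2 j).const_mul _
      rw [integral_add intSub intMul2, integral_sub (int_aj2 j) intMulC,
        integral_const_mul, integral_const_mul, hcross j, haj2_int j]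
      ring
    simp only [h2]
    rw [Finset.sum_add_distrib, ← Finset.mul_sum, ← Finset.mul_sum, norm_sq xt, HH]
  -- pointwise key inequality
  have key : ∀ ω, ‖yt ω - xt - η • gradient (fi (it ω)) (yt ω)‖ ^ 2
      ≤ 2 * ‖yt ω - xt - η • gradient (fi (it ω)) xt‖ ^ 2
        + 2 * (η * Lmax) ^ 2 * ‖yt ω - xt‖ ^ 2 := by
    intro ω
    have hrw : yt ω - xt - η • gradient (fi (it ω)) (yt ω)
        = (yt ω - xt - η • gradient (fi (it ω)) xt)
          - η • (gradient (fi (it ω)) (yt ω) - gradient (fi (it ω)) xt) := by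
      rw [smul_sub]; abel
    have h3 : ‖η • (gradient (fi (it ω)) (yt ω) - gradient (fi (it ω)) xt)‖
        ≤ η * Lmax * ‖yt ω - xt‖ := by
      rw [norm_smul, Real.norm_eq_abs, abs_of_pos hη]
      have h4 := hLip (it ω) (yt ω) xt
      have h5 : L (it ω) ≤ Lmax := hLmax.2 (Set.mem_range_self _)
      have h6 : L (it ω) * ‖yt ω - xt‖ ≤ Lmax * ‖yt ω - xt‖ :=
        mul_le_mul_of_nonneg_right h5 (norm_nonneg _)
      have h7 := h4.trans h6
      calc η * ‖gradient (fi (it ω)) (yt ω) - gradient (fi (it ω)) xt‖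
          ≤ η * (Lmax * ‖yt ω - xt‖) := mul_le_mul_of_nonneg_left h7 hη.le
        _ = η * Lmax * ‖yt ω - xt‖ := by ring
    have h2 : ‖yt ω - xt - η • gradient (fi (it ω)) (yt ω)‖
        ≤ ‖yt ω - xt - η • gradient (fi (it ω)) xt‖ + η * Lmax * ‖yt ω - xt‖ := by
      rw [hrw]
      exact (norm_sub_le _ _).trans (by linarith)
    have h8 := pow_le_pow_left₀ (norm_nonneg _) h2 2
    nlinarith [sq_nonneg (‖yt ω - xt - η • gradient (fi (it ω)) xt‖ - η * Lmax * ‖yt ω - xt‖)]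
  -- put it together
  have main : ∫ ω, ‖yt ω - xt - η • gradient (fi (it ω)) (yt ω)‖ ^ 2 ∂P
      ≤ 2 * ((1 - ξ) / ξ * ‖xt‖ ^ 2 + η ^ 2 * ∫ ω, ‖gradient (fi (it ω)) xt‖ ^ 2 ∂P)
        + 2 * (η * Lmax) ^ 2 * ((1 - ξ) / ξ * ‖xt‖ ^ 2) := by
    have step := integral_mono_of_nonneg
      (g := fun ω => 2 * ‖yt ω - xt - η • gradient (fi (it ω)) xt‖ ^ 2
        + 2 * (η * Lmax) ^ 2 * ‖yt ω - xt‖ ^ 2)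
      (ae_of_all _ fun ω => by positivity)
      ((intQ.const_mul 2).add (intA.const_mul (2 * (η * Lmax) ^ 2)) :
        Integrable (fun ω => 2 * ‖yt ω - xt - η • gradient (fi (it ω)) xt‖ ^ 2
          + 2 * (η * Lmax) ^ 2 * ‖yt ω - xt‖ ^ 2) P) (ae_of_all _ key)
    have intF1 : Integrable (fun ω => 2 * ‖yt ω - xt - η • gradient (fi (it ω)) xt‖ ^ 2) P :=
      intQ.const_mul 2
    have intF2 : Integrable (fun ω => 2 * (η * Lmax) ^ 2 * ‖yt ω - xt‖ ^ 2) P :=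
      intA.const_mul _
    rwa [integral_add intF1 intF2, integral_const_mul, integral_const_mul, HQ, HA] at step
  have hxs : ‖xt‖ ^ 2 ≤ 2 * (‖xt - xstar‖ ^ 2 + ‖xstar‖ ^ 2) := by
    have h1 : ‖xt‖ ≤ ‖xt - xstar‖ + ‖xstar‖ := by
      calc ‖xt‖ = ‖xt - xstar + xstar‖ := by rw [sub_add_cancel]
        _ ≤ ‖xt - xstar‖ + ‖xstar‖ := norm_add_le _ _
    have h1sq := pow_le_pow_left₀ (norm_nonneg xt) h1 2
    nlinarith [h1sq, sq_nonneg (‖xt - xstar‖ - ‖xstar‖)]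
  have hρnn : (0:ℝ) ≤ (1 - ξ) / ξ := div_nonneg (by linarith) hξ0.le
  refine main.trans ?_
  have hcoef : 4 * (1 + η ^ 2 * Lmax ^ 2) * (1 - ξ) / ξ
      = 4 * (1 + η ^ 2 * Lmax ^ 2) * ((1 - ξ) / ξ) := by ring
  rw [hcoef]
  have key2 := mul_le_mul_of_nonneg_left hxs
    (mul_nonneg (by positivity : (0:ℝ) ≤ 1 + η ^ 2 * Lmax ^ 2) hρnn)
  nlinarith [key2]
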